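/- Let Y be a Markov chain with a σ-finite recurrent invariant measure μ, and let A be measurable with P_μ(Y_0 ∈ A^c, Y_1 ∈ A) > 0. Then the measures μ_A^entr := ∫_{A^c} P_x(Y_1 ∈ ·) μ(dx) on A and μ_{A^c}^exit(dx) := P_x(Y_1 ∈ A) μ(dx) on A^c assign zero mass to the complements of N_A, where N_A = {x : P_x(Y visits A i.o. and A^c i.o.) = 1}; i.e. μ_A^entr(A \ N_A) = 0 and μ_{A^c}^exit(A^c \ N_A) = 0. -/

import Mathlib

open MeasureTheory Set

/-- The set of starting points from which the chain a.s. visits both `A` and `Aᶜ`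
infinitely often. -/
def NAset {X : Type*} [MeasurableSpace X] (P : X → Measure (ℕ → X)) (A : Set X) : Set X :=
  {x | P x {ω | {k | ω k ∈ A}.Infinite ∧ {k | ω k ∈ Aᶜ}.Infinite} = 1}

open scoped ENNReal NNReal

namespace Stmt18Aux

variable {X : Type*}

/-- shift on paths -/
def shf : (ℕ → X) → (ℕ → X) := fun ω n => ω (n + 1)

/-- visits `C` infinitely often -/
def ioe (C : Set X) : Set (ℕ → X) := {ω | {k | ω k ∈ C}.Infinite}

/-- hits `C` at some time `≥ 1` -/
def hitA (C : Set X) : Set (ℕ → X) := {ω | ∃ n, 1 ≤ n ∧ ω n ∈ C}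

lemma natSet_infinite_iff {s : Set ℕ} : s.Infinite ↔ ∀ n, ∃ m, n ≤ m ∧ m ∈ s := by
  constructor
  · intro hs n
    by_contra h
    push_neg at h
    exact hs (Set.Finite.subset (Finset.range n).finite_toSet
      (fun m hm => by
        simp only [Finset.coe_range, Set.mem_Iio]
        by_contra hlt
        exact h m (le_of_not_gt hlt) hm))
  · intro h hfin
    obtain ⟨b, hb⟩ := hfin.bddAbove
    obtain ⟨m, hm, hms⟩ := h (b + 1)
    exact absurd (hb hms) (by omega)

lemma shf_iterate_apply (n : ℕ) (ω : ℕ → X) (j : ℕ) : (shf^[n] ω) j = ω (j + n) := by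
  induction n generalizing ω j with
  | zero => rfl
  | succ n ih =>
    rw [Function.iterate_succ_apply]
    rw [ih]
    simp [shf]
    ring_nf

lemma mem_ioe {C : Set X} {ω : ℕ → X} : ω ∈ ioe C ↔ ∀ n, ∃ m, n ≤ m ∧ ω m ∈ C := by
  simp only [ioe, Set.mem_setOf_eq, natSet_infinite_iff, Set.mem_setOf_eq]

lemma shf_preimage_ioe (C : Set X) : shf ⁻¹' ioe C = ioe C := by
  ext ω
  simp only [Set.mem_preimage, mem_ioe]
  constructor
  · intro h n
    obtain ⟨m, hm, hmC⟩ := h n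
    exact ⟨m + 1, by omega, hmC⟩
  · intro h n
    obtain ⟨m, hm, hmC⟩ := h (n + 1)
    refine ⟨m - 1, by omega, ?_⟩
    show ω (m - 1 + 1) ∈ C
    have : m - 1 + 1 = m := by omega
    rw [this]; exact hmC

lemma shf_iterate_preimage_ioe (C : Set X) (n : ℕ) : shf^[n] ⁻¹' ioe C = ioe C := by
  induction n with
  | zero => simp
  | succ n ih =>
    rw [Function.iterate_succ, Set.preimage_comp, ih, shf_preimage_ioe]

lemma measurable_shf [MeasurableSpace X] : Measurable (shf : (ℕ → X) → (ℕ → X)) :=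
  measurable_pi_lambda _ (fun n => measurable_pi_apply (n + 1))

lemma measurableSet_ev [MeasurableSpace X] {C : Set X} (hC : MeasurableSet C) (n : ℕ) :
    MeasurableSet {ω : ℕ → X | ω n ∈ C} :=
  (measurable_pi_apply n) hC

lemma measurableSet_ioe [MeasurableSpace X] {C : Set X} (hC : MeasurableSet C) :
    MeasurableSet (ioe C) := by
  have : ioe C = ⋂ n, ⋃ m, ⋃ (_ : n ≤ m), {ω : ℕ → X | ω m ∈ C} := by
    ext ω
    simp only [mem_ioe, Set.mem_iInter, Set.mem_iUnion, Set.mem_setOf_eq]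
    constructor
    · intro h n
      obtain ⟨m, hm, hmC⟩ := h n
      exact ⟨m, hm, hmC⟩
    · intro h n
      obtain ⟨m, hm, hmC⟩ := h n
      exact ⟨m, hm, hmC⟩
  rw [this]
  exact MeasurableSet.iInter fun n => MeasurableSet.iUnion fun m =>
    MeasurableSet.iUnion fun _ => measurableSet_ev hC m

lemma measurableSet_hitA [MeasurableSpace X] {C : Set X} (hC : MeasurableSet C) :
    MeasurableSet (hitA C) := by
  have : hitA C = ⋃ n, ⋃ (_ : 1 ≤ n), {ω : ℕ → X | ω n ∈ C} := by
    ext ω; simp [hitA]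
  rw [this]
  exact MeasurableSet.iUnion fun n => MeasurableSet.iUnion fun _ => measurableSet_ev hC n

lemma ioe_subset_hitA (C : Set X) : ioe C ⊆ hitA C := by
  intro ω hω
  obtain ⟨m, hm, hmC⟩ := mem_ioe.mp hω 1
  exact ⟨m, hm, hmC⟩

lemma ioe_mono {C D : Set X} (h : C ⊆ D) : ioe C ⊆ ioe D := by
  intro ω hω
  rw [mem_ioe] at hω ⊢
  intro n
  obtain ⟨m, hm, hmC⟩ := hω n
  exact ⟨m, hm, h hmC⟩

set_option linter.unusedSectionVars false

section Core
variable [MeasurableSpace X] (P : X → Measure (ℕ → X)) [∀ x, IsProbabilityMeasure (P x)]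

noncomputable def kap : X → Measure X := fun x => (P x).map (fun ω => ω 1)

instance (x : X) : IsProbabilityMeasure (kap P x) :=
  Measure.isProbabilityMeasure_map (measurable_pi_apply 1).aemeasurable

lemma kap_apply {C : Set X} (hC : MeasurableSet C) (x : X) :
    kap P x C = P x {ω | ω 1 ∈ C} := by
  rw [kap, Measure.map_apply (measurable_pi_apply 1) hC]; rfl

variable (hstart : ∀ x, P x {ω | ω 0 = x} = 1)
variable (hMarkov : ∀ x, ∀ B : Set (ℕ → X), MeasurableSet B →
      P x ((fun ω n => ω (n + 1)) ⁻¹' B) = ∫⁻ y, P y B ∂((P x).map fun ω => ω 1))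

include hMarkov in
lemma pstep {B : Set (ℕ → X)} (hB : MeasurableSet B) (x : X) :
    P x (shf ⁻¹' B) = ∫⁻ y, P y B ∂(kap P x) :=
  hMarkov x B hB

include hstart in
lemma p0_mem' {C : Set X} {y : X} (hy : y ∈ C) :
    P y {ω : ℕ → X | ω 0 ∈ C} = 1 := by
  refine le_antisymm prob_le_one ?_
  calc (1 : ℝ≥0∞) = P y {ω | ω 0 = y} := (hstart y).symm
    _ ≤ P y {ω | ω 0 ∈ C} := measure_mono (fun ω hω => by
        simp only [Set.mem_setOf_eq] at hω ⊢; rw [hω]; exact hy)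

include hstart in
lemma p0_zero' {C : Set X} (hC : MeasurableSet C) {y : X} (hy : y ∉ C) :
    P y {ω : ℕ → X | ω 0 ∈ C} = 0 := by
  have h1 : P y {ω : ℕ → X | ω 0 ∈ Cᶜ} = 1 := p0_mem' P hstart hy
  have h2 : MeasurableSet {ω : ℕ → X | ω 0 ∈ C} := (measurable_pi_apply 0) hC
  have h3 : {ω : ℕ → X | ω 0 ∈ Cᶜ} = {ω : ℕ → X | ω 0 ∈ C}ᶜ := rfl
  rw [h3, prob_compl_eq_one_sub h2] at h1
  by_contra h0
  have h4 : (1:ℝ≥0∞) - P y {ω : ℕ → X | ω 0 ∈ C} < 1 :=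
    ENNReal.sub_lt_self ENNReal.one_ne_top one_ne_zero h0
  rw [h1] at h4
  exact lt_irrefl _ h4

include hstart in
lemma p0_mem {C : Set X} (hC : MeasurableSet C) {y : X} (hy : y ∈ C) (B : Set (ℕ → X)) :
    P y ({ω : ℕ → X | ω 0 ∈ C} ∩ B) = P y B := by
  have h2 : MeasurableSet {ω : ℕ → X | ω 0 ∈ C} := (measurable_pi_apply 0) hC
  have hcompl : P y {ω : ℕ → X | ω 0 ∈ C}ᶜ = 0 := by
    rw [prob_compl_eq_one_sub h2, p0_mem' P hstart hy, tsub_self]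
  have hdiff : P y (B \ {ω : ℕ → X | ω 0 ∈ C}) = 0 :=
    measure_mono_null (fun ω hω => hω.2) hcompl
  have := measure_inter_add_diff (μ := P y) B h2
  rw [Set.inter_comm]
  rw [hdiff, add_zero] at this
  exact this

include hstart in
include hstart in
lemma p0_zero {C : Set X} (hC : MeasurableSet C) {y : X} (hy : y ∉ C) (B : Set (ℕ → X)) :
    P y ({ω : ℕ → X | ω 0 ∈ C} ∩ B) = 0 :=
  measure_mono_null (Set.inter_subset_left) (p0_zero' P hstart hC hy)

include hstart hMarkov in
/-- conditional one-step Markov: restrict to where the next state lands -/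
lemma pstep_ind {C : Set X} (hC : MeasurableSet C) {B : Set (ℕ → X)} (hB : MeasurableSet B)
    (x : X) :
    P x (shf ⁻¹' ({ω : ℕ → X | ω 0 ∈ C} ∩ B)) = ∫⁻ y in C, P y B ∂(kap P x) := by
  have h2 : MeasurableSet {ω : ℕ → X | ω 0 ∈ C} := (measurable_pi_apply 0) hC
  rw [pstep P hMarkov (h2.inter hB) x]
  rw [← lintegral_indicator hC]
  congr 1
  ext y
  by_cases hy : y ∈ C
  · rw [Set.indicator_of_mem hy, p0_mem P hstart hC hy]
  · rw [Set.indicator_of_notMem hy, p0_zero P hstart hC hy]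

include hMarkov in
lemma prop_mono {B B' : Set (ℕ → X)} (hB : MeasurableSet B) (hB' : MeasurableSet B')
    (h : ∀ y, P y B ≤ P y B') :
    ∀ n x, P x (shf^[n] ⁻¹' B) ≤ P x (shf^[n] ⁻¹' B') := by
  intro n
  induction n with
  | zero => simpa using h
  | succ n ih =>
    intro x
    rw [Function.iterate_succ, Set.preimage_comp, Set.preimage_comp]
    rw [pstep P hMarkov ((measurable_shf.iterate n) hB) x,
      pstep P hMarkov ((measurable_shf.iterate n) hB') x]
    exact lintegral_mono fun y => ih y

include hMarkov in
lemma prop_zero {B : Set (ℕ → X)} (hB : MeasurableSet B) (h : ∀ y, P y B = 0) :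
    ∀ n x, P x (shf^[n] ⁻¹' B) = 0 := by
  intro n x
  refine le_antisymm ?_ zero_le
  have hle : ∀ y, P y B ≤ P y (∅ : Set (ℕ → X)) := fun y => by simp [h y]
  have := prop_mono P hMarkov hB MeasurableSet.empty hle n x
  simpa using this


/-- hits `T` at a time in `[1, n]` -/
def hle (T : Set X) (n : ℕ) : Set (ℕ → X) := {ω | ∃ m, 1 ≤ m ∧ m ≤ n ∧ ω m ∈ T}

lemma measurableSet_hle {T : Set X} (hT : MeasurableSet T) (n : ℕ) :
    MeasurableSet (hle T n) := by
  have : hle T n = ⋃ m, ⋃ (_ : 1 ≤ m), ⋃ (_ : m ≤ n), {ω : ℕ → X | ω m ∈ T} := by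
    ext ω
    simp only [hle, Set.mem_setOf_eq, Set.mem_iUnion]
    exact ⟨fun ⟨m, a, b, c⟩ => ⟨m, a, b, c⟩, fun ⟨m, a, b, c⟩ => ⟨m, a, b, c⟩⟩
  rw [this]
  exact MeasurableSet.iUnion fun m => MeasurableSet.iUnion fun _ =>
    MeasurableSet.iUnion fun _ => (measurable_pi_apply m) hT

lemma hle_zero (T : Set X) : hle T 0 = ∅ := by
  ext ω; simp only [hle, Set.mem_setOf_eq, Set.mem_empty_iff_false, iff_false]
  rintro ⟨m, h1, h2, -⟩; omega

lemma hle_succ (T : Set X) (n : ℕ) :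
    hle T (n + 1) = shf ⁻¹' ({ω : ℕ → X | ω 0 ∈ T} ∪ hle T n) := by
  ext ω
  simp only [hle, Set.mem_setOf_eq, Set.mem_preimage, Set.mem_union]
  constructor
  · rintro ⟨m, h1, h2, h3⟩
    rcases Nat.eq_or_lt_of_le h1 with h | h
    · left; show ω (0 + 1) ∈ T; rw [show 0 + 1 = m by omega]; exact h3
    · right; exact ⟨m - 1, by omega, by omega, by
        show ω (m - 1 + 1) ∈ T; rw [show m - 1 + 1 = m by omega]; exact h3⟩
  · rintro (h | ⟨m, h1, h2, h3⟩)
    · exact ⟨1, le_rfl, by omega, h⟩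
    · exact ⟨m + 1, by omega, by omega, h3⟩

lemma hle_subset_hitA (T : Set X) (n : ℕ) : hle T n ⊆ hitA T := by
  rintro ω ⟨m, h1, _, h3⟩; exact ⟨m, h1, h3⟩

lemma hitA_eq_iUnion_hle (T : Set X) : hitA T = ⋃ n, hle T n := by
  ext ω
  simp only [hitA, hle, Set.mem_iUnion, Set.mem_setOf_eq]
  constructor
  · rintro ⟨n, h1, h3⟩; exact ⟨n, n, h1, le_rfl, h3⟩
  · rintro ⟨n, m, h1, _, h3⟩; exact ⟨m, h1, h3⟩

lemma hle_mono (T : Set X) : Monotone (hle T) := by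
  intro a b hab ω
  rintro ⟨m, h1, h2, h3⟩; exact ⟨m, h1, le_trans h2 hab, h3⟩

include hstart hMarkov in
/-- if from every point of `T` the chain realizes a shift-invariant event with probability
at most `b`, then from anywhere, the event jointly with hitting `T` has probability `≤ b`. -/
lemma firstHit {T : Set X} (hT : MeasurableSet T) {E : Set (ℕ → X)} (hE : MeasurableSet E)
    (hEinv : shf ⁻¹' E = E) {b : ℝ≥0∞} (hb : ∀ y ∈ T, P y E ≤ b) (x : X) :
    P x (E ∩ hitA T) ≤ b := by
  have h0T : MeasurableSet {ω : ℕ → X | ω 0 ∈ T} := (measurable_pi_apply 0) hT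
  have key : ∀ n, ∀ z, P z (E ∩ hle T n) ≤ b := by
    intro n
    induction n with
    | zero => intro z; rw [hle_zero]; simp
    | succ n ih =>
      intro z
      have hid : E ∩ hle T (n + 1) = shf ⁻¹' (E ∩ ({ω : ℕ → X | ω 0 ∈ T} ∪ hle T n)) := by
        rw [hle_succ, Set.preimage_inter, hEinv]
      rw [hid, pstep P hMarkov (hE.inter (h0T.union (measurableSet_hle hT n))) z]
      have hpt : ∀ y, P y (E ∩ ({ω : ℕ → X | ω 0 ∈ T} ∪ hle T n)) ≤ b := by
        intro y
        by_cases hy : y ∈ T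
        · exact le_trans (measure_mono Set.inter_subset_left) (hb y hy)
        · have hsplit : E ∩ ({ω : ℕ → X | ω 0 ∈ T} ∪ hle T n) ⊆
              {ω : ℕ → X | ω 0 ∈ T} ∪ (E ∩ hle T n) := by
            rintro ω ⟨h1, h2 | h2⟩
            · exact Or.inl h2
            · exact Or.inr ⟨h1, h2⟩
          calc P y _ ≤ P y ({ω : ℕ → X | ω 0 ∈ T} ∪ (E ∩ hle T n)) := measure_mono hsplit
            _ ≤ P y {ω : ℕ → X | ω 0 ∈ T} + P y (E ∩ hle T n) := measure_union_le _ _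
            _ ≤ 0 + b := add_le_add (le_of_eq (p0_zero' P hstart hT hy)) (ih y)
            _ = b := zero_add b
      calc ∫⁻ y, P y (E ∩ ({ω : ℕ → X | ω 0 ∈ T} ∪ hle T n)) ∂(kap P z)
          ≤ ∫⁻ _, b ∂(kap P z) := lintegral_mono hpt
        _ = b := by rw [lintegral_const, measure_univ, mul_one]
  have hcover : E ∩ hitA T = ⋃ n, E ∩ hle T n := by
    rw [hitA_eq_iUnion_hle, Set.inter_iUnion]
  rw [hcover, Directed.measure_iUnion
    (Monotone.directed_le (fun a b hab => Set.inter_subset_inter_right E (hle_mono T hab)))]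
  exact iSup_le fun n => key n x

include hstart hMarkov in
/-- geometric trick: if every point of `S` has chance `≥ ε` of stepping into `R`,
then visiting `S` infinitely often while never entering `R` (after time 0) is impossible. -/
lemma geoHit {S R : Set X} (hS : MeasurableSet S) (hR : MeasurableSet R)
    {ε : ℝ≥0∞} (hε : ε ≠ 0) (hSR : ∀ y ∈ S, ε ≤ kap P y R) (x : X) :
    P x (ioe S ∩ (hitA R)ᶜ) = 0 := by
  set V := ioe S ∩ (hitA R)ᶜ with hVdef
  have hV : MeasurableSet V := (measurableSet_ioe hS).inter (measurableSet_hitA hR).compl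
  have h0S : MeasurableSet {ω : ℕ → X | ω 0 ∈ S} := (measurable_pi_apply 0) hS
  have hVid : V = shf ⁻¹' ({ω : ℕ → X | ω 0 ∈ Rᶜ} ∩ V) := by
    have hioe_shift : ∀ ω : ℕ → X, shf ω ∈ ioe S ↔ ω ∈ ioe S := fun ω => by
      rw [← Set.mem_preimage, shf_preimage_ioe]
    ext ω
    simp only [hVdef, Set.mem_inter_iff, Set.mem_preimage, Set.mem_setOf_eq, Set.mem_compl_iff,
      hitA, hioe_shift]
    constructor
    · rintro ⟨h1, h2⟩
      exact ⟨fun hc => h2 ⟨1, le_rfl, hc⟩, h1, fun ⟨m, hm1, hm3⟩ => h2 ⟨m + 1, by omega, hm3⟩⟩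
    · rintro ⟨h1, h2, h3⟩
      refine ⟨h2, fun ⟨m, hm1, hm3⟩ => ?_⟩
      rcases Nat.eq_or_lt_of_le hm1 with h | h
      · exact h1 (show ω (0 + 1) ∈ R by rw [show 0 + 1 = m by omega]; exact hm3)
      · exact h3 ⟨m - 1, by omega, by
          show ω (m - 1 + 1) ∈ R
          rw [show m - 1 + 1 = m by omega]; exact hm3⟩
  set M := ⨆ z, P z V with hMdef
  have hM1 : M ≤ 1 := iSup_le fun z => prob_le_one
  have hsub : ∀ y ∈ S, P y V ≤ (1 - ε) * M := by
    intro y hy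
    have h1 : P y V = ∫⁻ z in Rᶜ, P z V ∂(kap P y) := by
      conv_lhs => rw [hVid]
      exact pstep_ind P hstart hMarkov hR.compl hV y
    have h2 : kap P y Rᶜ ≤ 1 - ε := by
      rw [prob_compl_eq_one_sub hR]
      exact tsub_le_tsub_left (hSR y hy) 1
    calc P y V = ∫⁻ z in Rᶜ, P z V ∂(kap P y) := h1
      _ ≤ ∫⁻ _ in Rᶜ, M ∂(kap P y) := lintegral_mono fun z => le_iSup (fun w => P w V) z
      _ = M * kap P y Rᶜ := setLIntegral_const _ _
      _ ≤ M * (1 - ε) := mul_le_mul_right h2 M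
      _ = (1 - ε) * M := mul_comm _ _
  have key : ∀ n, ∀ z, P z (V ∩ hle S n) ≤ (1 - ε) * M := by
    intro n
    induction n with
    | zero => intro z; rw [hle_zero]; simp
    | succ n ih =>
      intro z
      have hid : V ∩ hle S (n + 1) =
          shf ⁻¹' ({ω : ℕ → X | ω 0 ∈ Rᶜ} ∩ (V ∩ ({ω : ℕ → X | ω 0 ∈ S} ∪ hle S n))) := by
        conv_lhs => rw [hVid, hle_succ]
        rw [← Set.preimage_inter, Set.inter_assoc]
      rw [hid, pstep_ind P hstart hMarkov hR.compl
        (hV.inter (h0S.union (measurableSet_hle hS n)))]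
      have hpt : ∀ y, P y (V ∩ ({ω : ℕ → X | ω 0 ∈ S} ∪ hle S n)) ≤ (1 - ε) * M := by
        intro y
        by_cases hy : y ∈ S
        · exact le_trans (measure_mono Set.inter_subset_left) (hsub y hy)
        · have hsplit : V ∩ ({ω : ℕ → X | ω 0 ∈ S} ∪ hle S n) ⊆
              {ω : ℕ → X | ω 0 ∈ S} ∪ (V ∩ hle S n) := by
            rintro ω ⟨h1, h2 | h2⟩
            · exact Or.inl h2
            · exact Or.inr ⟨h1, h2⟩
          calc P y _ ≤ P y ({ω : ℕ → X | ω 0 ∈ S} ∪ (V ∩ hle S n)) := measure_mono hsplit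
            _ ≤ P y {ω : ℕ → X | ω 0 ∈ S} + P y (V ∩ hle S n) := measure_union_le _ _
            _ ≤ 0 + (1 - ε) * M := add_le_add (le_of_eq (p0_zero' P hstart hS hy)) (ih y)
            _ = (1 - ε) * M := zero_add _
      calc ∫⁻ y in Rᶜ, P y (V ∩ ({ω : ℕ → X | ω 0 ∈ S} ∪ hle S n)) ∂(kap P z)
          ≤ ∫⁻ _ in Rᶜ, (1 - ε) * M ∂(kap P z) := lintegral_mono fun y => hpt y
        _ = (1 - ε) * M * kap P z Rᶜ := setLIntegral_const _ _
        _ ≤ (1 - ε) * M * 1 := mul_le_mul_right prob_le_one _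
        _ = (1 - ε) * M := mul_one _
  have hcoverV : V ⊆ ⋃ n, V ∩ hle S n := by
    intro ω hω
    obtain ⟨m, hm, hmS⟩ := ioe_subset_hitA S hω.1
    exact Set.mem_iUnion.mpr ⟨m, hω, m, hm, le_rfl, hmS⟩
  have hMle : M ≤ (1 - ε) * M := by
    refine iSup_le fun z => ?_
    calc P z V ≤ P z (⋃ n, V ∩ hle S n) := measure_mono hcoverV
      _ = ⨆ n, P z (V ∩ hle S n) := Directed.measure_iUnion
          (Monotone.directed_le (fun a b hab => Set.inter_subset_inter_right V (hle_mono S hab)))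
      _ ≤ (1 - ε) * M := iSup_le fun n => key n z
  have hM0 : M = 0 := by
    by_contra hM0
    have h1e : (1 : ℝ≥0∞) - ε < 1 := ENNReal.sub_lt_self ENNReal.one_ne_top one_ne_zero hε
    have hlt : (1 - ε) * M < 1 * M :=
      ENNReal.mul_lt_mul_left hM0 (ne_top_of_le_ne_top ENNReal.one_ne_top hM1) h1e
    rw [one_mul] at hlt
    exact lt_irrefl _ (lt_of_le_of_lt hMle hlt)
  exact le_antisymm (le_trans (le_iSup (fun z => P z V) x) hM0.le) zero_le



lemma iter_preimage_ev (C : Set X) (k : ℕ) :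
    shf^[k] ⁻¹' {ω : ℕ → X | ω 0 ∈ C} = {ω : ℕ → X | ω k ∈ C} := by
  ext ω
  simp only [Set.mem_preimage, Set.mem_setOf_eq, shf_iterate_apply, Nat.zero_add]

section Inv
variable (μ : Measure X)
variable (hmeas : ∀ B : Set (ℕ → X), MeasurableSet B → Measurable fun x => P x B)
variable (hinv : ∀ B : Set X, MeasurableSet B → ∫⁻ x, P x {ω | ω 1 ∈ B} ∂μ = μ B)

include hmeas in
lemma kap_measurable : Measurable (kap P) := by
  apply Measure.measurable_of_measurable_coe
  intro s hs
  simp only [kap_apply P hs]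
  exact hmeas _ (measurableSet_ev hs 1)

include hmeas hinv in
lemma bind_kap_eq : μ.bind (kap P) = μ := by
  ext s hs
  rw [Measure.bind_apply hs (kap_measurable P hmeas).aemeasurable]
  have : ∀ x, kap P x s = P x {ω | ω 1 ∈ s} := fun x => kap_apply P hs x
  rw [lintegral_congr this]
  exact hinv s hs

include hmeas hinv in
lemma lintegral_kap {g : X → ℝ≥0∞} (hg : Measurable g) :
    ∫⁻ x, (∫⁻ y, g y ∂(kap P x)) ∂μ = ∫⁻ y, g y ∂μ := by
  conv_rhs => rw [← bind_kap_eq P μ hmeas hinv]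
  rw [Measure.lintegral_bind (kap_measurable P hmeas).aemeasurable hg.aemeasurable]

include hstart hMarkov hmeas hinv in
lemma occupation {Z : Set X} (hZ : MeasurableSet Z) :
    ∀ n, ∫⁻ x, P x {ω | ω n ∈ Z} ∂μ = μ Z := by
  intro n
  induction n with
  | zero =>
    have h1 : ∀ x, P x {ω : ℕ → X | ω 0 ∈ Z} = Z.indicator (fun _ => 1) x := by
      intro x
      by_cases hx : x ∈ Z
      · rw [Set.indicator_of_mem hx, p0_mem' P hstart hx]
      · rw [Set.indicator_of_notMem hx, p0_zero' P hstart hZ hx]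
    rw [lintegral_congr h1, lintegral_indicator hZ, setLIntegral_one]
  | succ n ih =>
    have h1 : ∀ x, P x {ω | ω (n + 1) ∈ Z} = ∫⁻ y, P y {ω | ω n ∈ Z} ∂(kap P x) := by
      intro x
      have hpre : {ω : ℕ → X | ω (n + 1) ∈ Z} = shf ⁻¹' {ω | ω n ∈ Z} := rfl
      rw [hpre, pstep P hMarkov (measurableSet_ev hZ n) x]
    rw [lintegral_congr h1, lintegral_kap P μ hmeas hinv (hmeas _ (measurableSet_ev hZ n))]
    exact ih

include hstart hMarkov hmeas hinv in
lemma null_prop {Z : Set X} (hZ : MeasurableSet Z) (hZ0 : μ Z = 0) :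
    ∀ᵐ x ∂μ, ∀ n, P x {ω | ω (n + 1) ∈ Z} = 0 := by
  have h1 : ∫⁻ x, ∑' n, P x {ω | ω (n + 1) ∈ Z} ∂μ = 0 := by
    rw [lintegral_tsum (fun n => (hmeas _ (measurableSet_ev hZ (n + 1))).aemeasurable)]
    simp only [occupation P hstart hMarkov μ hmeas hinv hZ, hZ0, tsum_zero]
  have h2 := (lintegral_eq_zero_iff
    (Measurable.ennreal_tsum fun n => hmeas _ (measurableSet_ev hZ (n + 1)))).mp h1
  filter_upwards [h2] with x hx n
  have hx' : ∑' n, P x {ω | ω (n + 1) ∈ Z} = 0 := hx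
  exact ENNReal.tsum_eq_zero.mp hx' n

include hstart hMarkov hmeas hinv in
/-- recurrence upgraded to: almost every point of `S` visits `S` infinitely often a.s. -/
lemma aeio {S : Set X} (hS : MeasurableSet S)
    (hrecS : ∀ᵐ x ∂μ.restrict S, P x (hitA S) = 1) :
    ∀ᵐ x ∂μ, x ∈ S → P x (ioe S) = 1 := by
  have hrmeas : Measurable fun x => P x (hitA S) := hmeas _ (measurableSet_hitA hS)
  have hae : ∀ᵐ x ∂μ, x ∈ S → P x (hitA S) = 1 := (ae_restrict_iff' hS).mp hrecS
  set Z := S ∩ {x | P x (hitA S) ≠ 1} with hZdef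
  have hZsub : MeasurableSet {x | P x (hitA S) ≠ 1} :=
    (hrmeas (measurableSet_singleton 1)).compl
  have hZmeas : MeasurableSet Z := hS.inter hZsub
  have hZ0 : μ Z = 0 := by
    have h0 : μ {x | ¬(x ∈ S → P x (hitA S) = 1)} = 0 := ae_iff.mp hae
    refine measure_mono_null ?_ h0
    intro x hx
    simp only [Set.mem_setOf_eq]
    intro h
    exact hx.2 (h hx.1)
  have hnull := null_prop P hstart hMarkov μ hmeas hinv hZmeas hZ0
  filter_upwards [hae, hnull] with x hx1 hx2 hxS
  have hr1 : P x (hitA S) = 1 := hx1 hxS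
  have hGb : ∀ y, P y ({ω : ℕ → X | ω 0 ∈ S} ∩ (hitA S)ᶜ) ≤ P y {ω : ℕ → X | ω 0 ∈ Z} := by
    intro y
    by_cases hyZ : y ∈ Z
    · rw [p0_mem' P hstart hyZ]
      exact prob_le_one
    · by_cases hyS : y ∈ S
      · have hry : P y (hitA S) = 1 := by
          by_contra hc
          exact hyZ ⟨hyS, hc⟩
        rw [p0_mem P hstart hS hyS]
        rw [prob_compl_eq_one_sub (measurableSet_hitA hS), hry, tsub_self]
        exact zero_le
      · rw [p0_zero P hstart hS hyS]
        exact zero_le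
  have hcompl : P x (ioe S)ᶜ = 0 := by
    have hcover : (ioe S)ᶜ ⊆ (hitA S)ᶜ ∪
        ⋃ n, shf^[n + 1] ⁻¹' ({ω : ℕ → X | ω 0 ∈ S} ∩ (hitA S)ᶜ) := by
      intro ω hω
      have hfinvis : {k | ω k ∈ S}.Finite := Set.not_infinite.mp hω
      by_cases hne : {k | 1 ≤ k ∧ ω k ∈ S}.Nonempty
      · right
        have hfin' : {k | 1 ≤ k ∧ ω k ∈ S}.Finite :=
          hfinvis.subset (fun k hk => hk.2)
        have hne' : hfin'.toFinset.Nonempty := by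
          rwa [Set.Finite.toFinset_nonempty]
        set n := hfin'.toFinset.max' hne' with hn
        have hnmem : n ∈ {k | 1 ≤ k ∧ ω k ∈ S} := by
          rw [← Set.Finite.mem_toFinset hfin']
          exact hfin'.toFinset.max'_mem hne'
        have hnmax : ∀ m ∈ {k | 1 ≤ k ∧ ω k ∈ S}, m ≤ n := by
          intro m hm
          exact hfin'.toFinset.le_max' m ((Set.Finite.mem_toFinset hfin').mpr hm)
        refine Set.mem_iUnion.mpr ⟨n - 1, ?_⟩
        have h1n : 1 ≤ n := hnmem.1
        have hn1 : n - 1 + 1 = n := by omega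
        rw [hn1]
        constructor
        · show shf^[n] ω 0 ∈ S
          rw [shf_iterate_apply, Nat.zero_add]
          exact hnmem.2
        · rintro ⟨m, hm1, hm3⟩
          rw [shf_iterate_apply] at hm3
          have : m + n ≤ n := hnmax (m + n) ⟨by omega, hm3⟩
          omega
      · left
        rintro ⟨m, hm1, hm3⟩
        exact hne ⟨m, hm1, hm3⟩
    refine measure_mono_null hcover (measure_union_null ?_ ?_)
    · rw [prob_compl_eq_one_sub (measurableSet_hitA hS), hr1, tsub_self]
    · refine measure_iUnion_null fun n => ?_
      refine le_antisymm ?_ zero_le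
      calc P x (shf^[n + 1] ⁻¹' ({ω : ℕ → X | ω 0 ∈ S} ∩ (hitA S)ᶜ))
          ≤ P x (shf^[n + 1] ⁻¹' {ω : ℕ → X | ω 0 ∈ Z}) := by
            exact prop_mono P hMarkov
              (((measurable_pi_apply 0) hS).inter (measurableSet_hitA hS).compl)
              ((measurable_pi_apply 0) hZmeas) hGb (n + 1) x
        _ = P x {ω | ω (n + 1) ∈ Z} := by rw [iter_preimage_ev]
        _ = 0 := hx2 n
  have := prob_compl_eq_one_sub (μ := P x) (measurableSet_ioe hS)
  rw [hcompl] at this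
  have h1le : (1 : ℝ≥0∞) ≤ P x (ioe S) := tsub_eq_zero_iff_le.mp this.symm
  exact le_antisymm prob_le_one h1le

end Inv


lemma prob_compl_zero {B : Set (ℕ → X)} (hB : MeasurableSet B) (x : X) (h : P x B = 1) :
    P x Bᶜ = 0 := by
  rw [prob_compl_eq_one_sub hB, h, tsub_self]

lemma prob_of_compl_zero {B : Set (ℕ → X)} (hB : MeasurableSet B) (x : X) (h : P x Bᶜ = 0) :
    P x B = 1 := by
  have h2 := prob_compl_eq_one_sub (μ := P x) hB
  rw [h] at h2
  exact le_antisymm prob_le_one (tsub_eq_zero_iff_le.mp h2.symm)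

lemma prob_inter_one {B C : Set (ℕ → X)} (hB : MeasurableSet B) (hC : MeasurableSet C) (x : X)
    (h1 : P x B = 1) (h2 : P x C = 1) : P x (B ∩ C) = 1 := by
  apply prob_of_compl_zero P (hB.inter hC)
  rw [Set.compl_inter]
  refine le_antisymm ?_ zero_le
  calc P x (Bᶜ ∪ Cᶜ) ≤ P x Bᶜ + P x Cᶜ := measure_union_le _ _
    _ = 0 := by rw [prob_compl_zero P hB x h1, prob_compl_zero P hC x h2, add_zero]

include hstart hMarkov in
/-- if a.s. `S` is visited infinitely often and every point of `S` has chance `≥ ε`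
to step into `R`, then a.s. `R` is visited infinitely often. -/
lemma core_io {S R : Set X} (hS : MeasurableSet S) (hR : MeasurableSet R) {ε : ℝ≥0∞}
    (hε : ε ≠ 0) (hSR : ∀ y ∈ S, ε ≤ kap P y R) (x : X) (hx : P x (ioe S) = 1) :
    P x (ioe R) = 1 := by
  have hV : MeasurableSet (ioe S ∩ (hitA R)ᶜ) :=
    (measurableSet_ioe hS).inter (measurableSet_hitA hR).compl
  have hVz : ∀ z, P z (ioe S ∩ (hitA R)ᶜ) = 0 := geoHit P hstart hMarkov hS hR hε hSR
  have hcover : (ioe R)ᶜ ∩ ioe S ⊆ ⋃ n, shf^[n] ⁻¹' (ioe S ∩ (hitA R)ᶜ) := by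
    rintro ω ⟨h1, h2⟩
    obtain ⟨b, hb⟩ := (Set.not_infinite.mp h1).bddAbove
    refine Set.mem_iUnion.mpr ⟨b + 1, Set.mem_preimage.mpr ⟨?_, ?_⟩⟩
    · have h3 : ω ∈ shf^[b + 1] ⁻¹' (ioe S) := by rw [shf_iterate_preimage_ioe]; exact h2
      exact h3
    · rintro ⟨m, hm1, hm3⟩
      rw [shf_iterate_apply] at hm3
      have h4 : m + (b + 1) ≤ b := hb hm3
      omega
  have h0 : P x ((ioe R)ᶜ ∩ ioe S) = 0 :=
    measure_mono_null hcover (measure_iUnion_null fun n => prop_zero P hMarkov hV hVz n x)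
  have h1 : P x (ioe R)ᶜ = 0 := by
    refine le_antisymm ?_ zero_le
    calc P x (ioe R)ᶜ ≤ P x (((ioe R)ᶜ ∩ ioe S) ∪ (ioe S)ᶜ) := measure_mono (fun ω hω => by
          by_cases h : ω ∈ ioe S
          · exact Or.inl ⟨hω, h⟩
          · exact Or.inr h)
      _ ≤ P x ((ioe R)ᶜ ∩ ioe S) + P x (ioe S)ᶜ := measure_union_le _ _
      _ = 0 := by rw [h0, prob_compl_zero P (measurableSet_ioe hS) x hx, add_zero]
  exact prob_of_compl_zero P (measurableSet_ioe hR) x h1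

end Core

lemma main {X : Type*} [MeasurableSpace X] (μ : Measure X) [SigmaFinite μ]
    (P : X → Measure (ℕ → X)) [∀ x, IsProbabilityMeasure (P x)]
    (hmeas : ∀ B : Set (ℕ → X), MeasurableSet B → Measurable fun x => P x B)
    (hstart : ∀ x, P x {ω | ω 0 = x} = 1)
    (hMarkov : ∀ x, ∀ B : Set (ℕ → X), MeasurableSet B →
      P x ((fun ω n => ω (n + 1)) ⁻¹' B) = ∫⁻ y, P y B ∂((P x).map fun ω => ω 1))
    (hinv : ∀ B : Set X, MeasurableSet B → ∫⁻ x, P x {ω | ω 1 ∈ B} ∂μ = μ B)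
    (hrec : ∀ F : Set X, MeasurableSet F → μ F ≠ ⊤ →
      ∀ᵐ x ∂μ.restrict F, P x {ω | ∃ n, 1 ≤ n ∧ ω n ∈ F} = 1)
    (A : Set X) (hA : MeasurableSet A) :
    (∫⁻ x in Aᶜ, P x {ω | ω 1 ∈ A \ NAset P A} ∂μ = 0) ∧
    (∫⁻ x in Aᶜ \ NAset P A, P x {ω | ω 1 ∈ A} ∂μ = 0) := by
  classical
  have hAc : MeasurableSet Aᶜ := hA.compl
  have hioA : MeasurableSet (ioe A) := measurableSet_ioe hA
  have hioAc : MeasurableSet (ioe Aᶜ) := measurableSet_ioe hAc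
  have hNAdef : NAset P A = {x | P x (ioe A ∩ ioe Aᶜ) = 1} := rfl
  have hNmeas : MeasurableSet (NAset P A) := by
    rw [hNAdef]
    exact (hmeas _ (hioA.inter hioAc)) (measurableSet_singleton 1)
  have hkapm : ∀ {R : Set X}, MeasurableSet R → Measurable fun x => kap P x R := by
    intro R hR
    have h : (fun x => kap P x R) = fun x => P x {ω | ω 1 ∈ R} :=
      funext fun x => kap_apply P hR x
    rw [h]; exact hmeas _ (measurableSet_ev hR 1)
  have hhAm : Measurable fun x => P x (ioe A) := hmeas _ hioA
  have hhAcm : Measurable fun x => P x (ioe Aᶜ) := hmeas _ hioAc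
  have hFin : ∀ (D : Set X) (m : ℕ), μ (D ∩ spanningSets μ m) ≠ ⊤ := fun D m =>
    ne_top_of_le_ne_top (measure_spanningSets_lt_top μ m).ne
      (measure_mono Set.inter_subset_right)
  have hmemF : ∀ x : X, ∃ m, x ∈ spanningSets μ m := fun x =>
    Set.mem_iUnion.mp (by rw [iUnion_spanningSets]; trivial)
  have hinvnz : ∀ k : ℕ, ((k : ℝ≥0∞) + 1)⁻¹ ≠ 0 := fun k =>
    ENNReal.inv_ne_zero.mpr (by
      exact ENNReal.add_ne_top.mpr ⟨ENNReal.natCast_ne_top k, ENNReal.one_ne_top⟩)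
  -- Step A : a.e. every point of a measurable set visits it infinitely often
  have stepA : ∀ D : Set X, MeasurableSet D → ∀ᵐ x ∂μ, x ∈ D → P x (ioe D) = 1 := by
    intro D hD
    have h1 : ∀ m : ℕ, ∀ᵐ x ∂μ,
        x ∈ D ∩ spanningSets μ m → P x (ioe (D ∩ spanningSets μ m)) = 1 := by
      intro m
      refine aeio P hstart hMarkov μ hmeas hinv
        (hD.inter (measurableSet_spanningSets μ m)) ?_
      exact hrec _ (hD.inter (measurableSet_spanningSets μ m)) (hFin D m)
    have h2 := ae_all_iff.mpr h1
    filter_upwards [h2] with x hx hxD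
    obtain ⟨m, hm⟩ := hmemF x
    have h3 := hx m ⟨hxD, hm⟩
    refine le_antisymm prob_le_one ?_
    calc (1 : ℝ≥0∞) = P x (ioe (D ∩ spanningSets μ m)) := h3.symm
      _ ≤ P x (ioe D) := measure_mono (ioe_mono Set.inter_subset_left)
  ----------------------------------------------------------------
  -- GOAL 2
  ----------------------------------------------------------------
  have hbad2 : ∀ (k m : ℕ),
      μ (Aᶜ ∩ {x | ((k : ℝ≥0∞) + 1)⁻¹ ≤ kap P x A} ∩ {x | P x (ioe A) ≠ 1}
        ∩ spanningSets μ m) = 0 := by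
    intro k m
    set S2 := Aᶜ ∩ {x | ((k : ℝ≥0∞) + 1)⁻¹ ≤ kap P x A} ∩ {x | P x (ioe A) ≠ 1}
        ∩ spanningSets μ m with hS2
    have hS2m : MeasurableSet S2 :=
      (((hAc.inter (measurableSet_le measurable_const (hkapm hA))).inter
        ((hhAm (measurableSet_singleton 1)).compl)).inter (measurableSet_spanningSets μ m))
    have hfin2 : μ S2 ≠ ⊤ := ne_top_of_le_ne_top (measure_spanningSets_lt_top μ m).ne
      (measure_mono Set.inter_subset_right)
    have haeS2 := aeio P hstart hMarkov μ hmeas hinv hS2m (hrec _ hS2m hfin2)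
    refine measure_eq_zero_iff_ae_notMem.mpr ?_
    filter_upwards [haeS2] with x hx hxS2
    have h1 : P x (ioe S2) = 1 := hx hxS2
    have h2 : P x (ioe A) = 1 :=
      core_io P hstart hMarkov hS2m hA (hinvnz k) (fun y hy => hy.1.1.2) x h1
    exact hxS2.1.2 h2
  have hbadset2 : μ (Aᶜ ∩ {x | kap P x A ≠ 0} ∩ {x | P x (ioe A) ≠ 1}) = 0 := by
    refine measure_mono_null ?_
      (measure_iUnion_null fun k => measure_iUnion_null fun m => hbad2 k m)
    rintro x ⟨⟨hx1, hx2⟩, hx3⟩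
    obtain ⟨n, hn⟩ := ENNReal.exists_inv_nat_lt hx2
    obtain ⟨m, hm⟩ := hmemF x
    refine Set.mem_iUnion.mpr ⟨n, Set.mem_iUnion.mpr ⟨m, ⟨⟨⟨hx1, ?_⟩, hx3⟩, hm⟩⟩⟩
    calc ((n : ℝ≥0∞) + 1)⁻¹ ≤ (n : ℝ≥0∞)⁻¹ := ENNReal.inv_le_inv.mpr le_self_add
      _ ≤ kap P x A := hn.le
  have goal2 : ∫⁻ x in Aᶜ \ NAset P A, P x {ω | ω 1 ∈ A} ∂μ = 0 := by
    have haeA : ∀ᵐ x ∂μ, x ∈ Aᶜ \ NAset P A → P x {ω | ω 1 ∈ A} = 0 := by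
      filter_upwards [stepA Aᶜ hAc, measure_eq_zero_iff_ae_notMem.mp hbadset2] with x hx1 hx2
      rintro ⟨hxAc, hxN⟩
      by_contra hne
      have hκ : kap P x A ≠ 0 := by rw [kap_apply P hA]; exact hne
      have hioAcx : P x (ioe Aᶜ) = 1 := hx1 hxAc
      have hx3 : P x (ioe A) ≠ 1 := by
        intro hone
        refine hxN ?_
        rw [hNAdef]
        exact prob_inter_one P hioA hioAc x hone hioAcx
      exact hx2 ⟨⟨hxAc, hκ⟩, hx3⟩
    have hmeasset : MeasurableSet (Aᶜ \ NAset P A) := hAc.diff hNmeas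
    have hres : ∀ᵐ x ∂μ.restrict (Aᶜ \ NAset P A), P x {ω | ω 1 ∈ A} = 0 :=
      (ae_restrict_iff' hmeasset).mpr haeA
    calc ∫⁻ x in Aᶜ \ NAset P A, P x {ω | ω 1 ∈ A} ∂μ
        = ∫⁻ _ in Aᶜ \ NAset P A, 0 ∂μ := lintegral_congr_ae hres
      _ = 0 := lintegral_zero
  ----------------------------------------------------------------
  -- GOAL 1
  ----------------------------------------------------------------
  set Tset : ℕ → Set X := fun j =>
    A ∩ {x | P x (ioe Aᶜ) ≤ 1 - ((j : ℝ≥0∞) + 1)⁻¹} ∩ spanningSets μ j with hTset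
  have hTm : ∀ j, MeasurableSet (Tset j) := fun j =>
    (hA.inter (measurableSet_le hhAcm measurable_const)).inter (measurableSet_spanningSets μ j)
  have hTmono : Monotone Tset := by
    intro a b hab x hx
    obtain ⟨⟨h1, h2⟩, h3⟩ := hx
    refine ⟨⟨h1, le_trans h2 (tsub_le_tsub_left (ENNReal.inv_le_inv.mpr
      (add_le_add_left (Nat.cast_le.mpr hab) 1)) 1)⟩,
      monotone_spanningSets μ hab h3⟩
  have hbad1 : ∀ (j i l : ℕ),
      μ (Aᶜ ∩ {x | ((i : ℝ≥0∞) + 1)⁻¹ ≤ kap P x (Tset j)} ∩ spanningSets μ l) = 0 := by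
    intro j i l
    set S1 := Aᶜ ∩ {x | ((i : ℝ≥0∞) + 1)⁻¹ ≤ kap P x (Tset j)} ∩ spanningSets μ l with hS1
    have hS1m : MeasurableSet S1 :=
      (hAc.inter (measurableSet_le measurable_const (hkapm (hTm j)))).inter
        (measurableSet_spanningSets μ l)
    have hfin1 : μ S1 ≠ ⊤ := ne_top_of_le_ne_top (measure_spanningSets_lt_top μ l).ne
      (measure_mono Set.inter_subset_right)
    have haeS1 := aeio P hstart hMarkov μ hmeas hinv hS1m (hrec _ hS1m hfin1)
    refine measure_eq_zero_iff_ae_notMem.mpr ?_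
    filter_upwards [haeS1, stepA Aᶜ hAc] with x hx1 hx2 hxS1
    have h1 : P x (ioe S1) = 1 := hx1 hxS1
    have h2 : P x (ioe (Tset j)) = 1 :=
      core_io P hstart hMarkov hS1m (hTm j) (hinvnz i) (fun y hy => hy.1.2) x h1
    have h3 : P x (ioe Aᶜ) = 1 := hx2 hxS1.1.1
    have h4 : P x (ioe (Tset j) ∩ ioe Aᶜ) = 1 :=
      prob_inter_one P (measurableSet_ioe (hTm j)) hioAc x h2 h3
    have hEinv : shf ⁻¹' (ioe (Tset j) ∩ ioe Aᶜ) = ioe (Tset j) ∩ ioe Aᶜ := by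
      rw [Set.preimage_inter, shf_preimage_ioe, shf_preimage_ioe]
    have h5 := firstHit P hstart hMarkov (hTm j)
      ((measurableSet_ioe (hTm j)).inter hioAc) hEinv
      (b := 1 - ((j : ℝ≥0∞) + 1)⁻¹)
      (fun y hy => le_trans (measure_mono Set.inter_subset_right) hy.1.2) x
    have hEsub : ioe (Tset j) ∩ ioe Aᶜ ∩ hitA (Tset j) = ioe (Tset j) ∩ ioe Aᶜ :=
      Set.inter_eq_self_of_subset_left (fun ω hω => ioe_subset_hitA _ hω.1)
    rw [hEsub, h4] at h5
    have h6 : (1 : ℝ≥0∞) - ((j : ℝ≥0∞) + 1)⁻¹ < 1 :=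
      ENNReal.sub_lt_self ENNReal.one_ne_top one_ne_zero (hinvnz j)
    exact absurd h5 (not_le.mpr h6)
  have hU1 : ∀ j, ∫⁻ x in Aᶜ, kap P x (Tset j) ∂μ = 0 := by
    intro j
    have hbs : μ (Aᶜ ∩ {x | kap P x (Tset j) ≠ 0}) = 0 := by
      refine measure_mono_null ?_
        (measure_iUnion_null fun i => measure_iUnion_null fun l => hbad1 j i l)
      rintro x ⟨hx1, hx2⟩
      obtain ⟨n, hn⟩ := ENNReal.exists_inv_nat_lt hx2
      obtain ⟨l, hl⟩ := hmemF x
      refine Set.mem_iUnion.mpr ⟨n, Set.mem_iUnion.mpr ⟨l, ⟨⟨hx1, ?_⟩, hl⟩⟩⟩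
      calc ((n : ℝ≥0∞) + 1)⁻¹ ≤ (n : ℝ≥0∞)⁻¹ := ENNReal.inv_le_inv.mpr le_self_add
        _ ≤ kap P x (Tset j) := hn.le
    have haeT : ∀ᵐ x ∂μ, x ∈ Aᶜ → kap P x (Tset j) = 0 := by
      filter_upwards [measure_eq_zero_iff_ae_notMem.mp hbs] with x hx hxAc
      by_contra hne
      exact hx ⟨hxAc, hne⟩
    have hres : ∀ᵐ x ∂μ.restrict Aᶜ, kap P x (Tset j) = 0 :=
      (ae_restrict_iff' hAc).mpr haeT
    calc ∫⁻ x in Aᶜ, kap P x (Tset j) ∂μ = ∫⁻ _ in Aᶜ, 0 ∂μ := lintegral_congr_ae hres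
      _ = 0 := lintegral_zero
  -- the sets Z and U
  set Zset := A ∩ {x | P x (ioe A) ≠ 1} with hZset
  have hZm : MeasurableSet Zset := hA.inter ((hhAm (measurableSet_singleton 1)).compl)
  have hZ0 : μ Zset = 0 := by
    refine measure_mono_null ?_ (ae_iff.mp (stepA A hA))
    intro x hx
    simp only [Set.mem_setOf_eq]
    intro h
    exact hx.2 (h hx.1)
  set Uset := A ∩ {x | P x (ioe Aᶜ) ≠ 1} with hUset
  have hUm : MeasurableSet Uset := hA.inter ((hhAcm (measurableSet_singleton 1)).compl)
  have hsubAN : A \ NAset P A ⊆ Zset ∪ Uset := by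
    intro x hx
    by_cases h1 : P x (ioe A) = 1
    · refine Or.inr ⟨hx.1, ?_⟩
      intro h2
      refine hx.2 ?_
      rw [hNAdef]
      exact prob_inter_one P hioA hioAc x h1 h2
    · exact Or.inl ⟨hx.1, h1⟩
  have hUcup : Uset = ⋃ j, Tset j := by
    ext x
    simp only [Set.mem_iUnion]
    constructor
    · rintro ⟨hxA, hne⟩
      have hlt : P x (ioe Aᶜ) < 1 := lt_of_le_of_ne prob_le_one hne
      have h0 : (1 : ℝ≥0∞) - P x (ioe Aᶜ) ≠ 0 := by
        rw [Ne, tsub_eq_zero_iff_le]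
        exact not_le.mpr hlt
      obtain ⟨n, hn⟩ := ENNReal.exists_inv_nat_lt h0
      obtain ⟨m, hm⟩ := hmemF x
      refine ⟨max n m, ⟨hxA, ?_⟩, monotone_spanningSets μ (le_max_right n m) hm⟩
      have hinvle : ((max n m : ℕ) : ℝ≥0∞) + 1 ≥ (n : ℝ≥0∞) := by
        refine le_trans ?_ le_self_add
        exact_mod_cast le_max_left n m
      have hlt2 : (((max n m : ℕ) : ℝ≥0∞) + 1)⁻¹ < 1 - P x (ioe Aᶜ) :=
        lt_of_le_of_lt (ENNReal.inv_le_inv.mpr hinvle) hn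
      have hadd : P x (ioe Aᶜ) + (((max n m : ℕ) : ℝ≥0∞) + 1)⁻¹ ≤ 1 := by
        have h7 := ENNReal.add_lt_add_left (a := P x (ioe Aᶜ)) (measure_ne_top _ _) hlt2
        rw [add_tsub_cancel_of_le prob_le_one] at h7
        exact h7.le
      exact ENNReal.le_sub_of_add_le_right
        (ENNReal.inv_ne_top.mpr (by simp)) hadd
    · rintro ⟨j, ⟨hxA, hle⟩, -⟩
      refine ⟨hxA, ?_⟩
      intro h1
      have hle2 : P x (ioe Aᶜ) ≤ 1 - ((j : ℝ≥0∞) + 1)⁻¹ := hle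
      rw [h1] at hle2
      have h6 : (1 : ℝ≥0∞) - ((j : ℝ≥0∞) + 1)⁻¹ < 1 :=
        ENNReal.sub_lt_self ENNReal.one_ne_top one_ne_zero (hinvnz j)
      exact absurd hle2 (not_le.mpr h6)
  have goal1 : ∫⁻ x in Aᶜ, P x {ω | ω 1 ∈ A \ NAset P A} ∂μ = 0 := by
    refine le_antisymm ?_ zero_le
    have hptbound : ∀ x, P x {ω | ω 1 ∈ A \ NAset P A} ≤
        P x {ω | ω 1 ∈ Zset} + P x {ω | ω 1 ∈ Uset} := by
      intro x
      calc P x {ω | ω 1 ∈ A \ NAset P A}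
          ≤ P x ({ω | ω 1 ∈ Zset} ∪ {ω | ω 1 ∈ Uset}) := measure_mono (fun ω hω => by
            rcases hsubAN hω with h | h
            · exact Or.inl h
            · exact Or.inr h)
        _ ≤ P x {ω | ω 1 ∈ Zset} + P x {ω | ω 1 ∈ Uset} := measure_union_le _ _
    have hZint : ∫⁻ x in Aᶜ, P x {ω | ω 1 ∈ Zset} ∂μ = 0 := by
      refine le_antisymm ?_ zero_le
      calc ∫⁻ x in Aᶜ, P x {ω | ω 1 ∈ Zset} ∂μ ≤ ∫⁻ x, P x {ω | ω 1 ∈ Zset} ∂μ :=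
            setLIntegral_le_lintegral _ _
        _ = μ Zset := hinv Zset hZm
        _ = 0 := hZ0
    have hUint : ∫⁻ x in Aᶜ, P x {ω | ω 1 ∈ Uset} ∂μ = 0 := by
      have hptw : ∀ x, P x {ω | ω 1 ∈ Uset} = ⨆ j, kap P x (Tset j) := by
        intro x
        rw [← kap_apply P hUm x, hUcup, Directed.measure_iUnion (hTmono.directed_le)]
      rw [lintegral_congr hptw]
      rw [lintegral_iSup (fun j => hkapm (hTm j))
        (fun a b hab x => measure_mono (hTmono hab))]
      simp only [hU1, iSup_const]
    calc ∫⁻ x in Aᶜ, P x {ω | ω 1 ∈ A \ NAset P A} ∂μ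
        ≤ ∫⁻ x in Aᶜ, (P x {ω | ω 1 ∈ Zset} + P x {ω | ω 1 ∈ Uset}) ∂μ :=
          lintegral_mono hptbound
      _ = (∫⁻ x in Aᶜ, P x {ω | ω 1 ∈ Zset} ∂μ) + ∫⁻ x in Aᶜ, P x {ω | ω 1 ∈ Uset} ∂μ :=
          lintegral_add_left (hmeas _ (measurableSet_ev hZm 1)) _
      _ = 0 := by rw [hZint, hUint, add_zero]
  exact ⟨goal1, goal2⟩

end Stmt18Aux

set_option linter.unusedVariables false in
/-- for a Markov chain with a σ-finite recurrent invariant measure `μ`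
and a set `A` with `P_μ(Y₀ ∈ Aᶜ, Y₁ ∈ A) > 0`, the entrance measure
`μ_A^entr = ∫_{Aᶜ} P_x(Y₁ ∈ ·) dμ` on `A` and the exit measure
`μ_{Aᶜ}^exit(dx) = P_x(Y₁ ∈ A) μ(dx)` on `Aᶜ` vanish outside `N_A`. -/
theorem stmt18 {X : Type*} [MeasurableSpace X] (μ : Measure X) [SigmaFinite μ]
    (P : X → Measure (ℕ → X)) [∀ x, IsProbabilityMeasure (P x)]
    (hmeas : ∀ B : Set (ℕ → X), MeasurableSet B → Measurable fun x => P x B)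
    (hstart : ∀ x, P x {ω | ω 0 = x} = 1)
    (hMarkov : ∀ x, ∀ B : Set (ℕ → X), MeasurableSet B →
      P x ((fun ω n => ω (n + 1)) ⁻¹' B) = ∫⁻ y, P y B ∂((P x).map fun ω => ω 1))
    (hinv : ∀ B : Set X, MeasurableSet B → ∫⁻ x, P x {ω | ω 1 ∈ B} ∂μ = μ B)
    (hrec : ∀ F : Set X, MeasurableSet F → μ F ≠ ⊤ →
      ∀ᵐ x ∂μ.restrict F, P x {ω | ∃ n, 1 ≤ n ∧ ω n ∈ F} = 1)
    (A : Set X) (hA : MeasurableSet A)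
    (hpos : 0 < ∫⁻ x in Aᶜ, P x {ω | ω 1 ∈ A} ∂μ) :
    (∫⁻ x in Aᶜ, P x {ω | ω 1 ∈ A \ NAset P A} ∂μ = 0) ∧
    (∫⁻ x in Aᶜ \ NAset P A, P x {ω | ω 1 ∈ A} ∂μ = 0) := by
  exact Stmt18Aux.main μ P hmeas hstart hMarkov hinv hrec A hA
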